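/- Let ℱ be a free ultrafilter on ℕ, let (𝒢_k) be a sequence of free ultrafilters on ℕ, and let (θ_k) be a sequence in (0,1) with θ_k → 1⁻. Then (1) the map f(x) = ℱ-lim_k ( 𝒢_k-lim_n Θ_{θ_k,n}(x) ) is a positive continuous linear functional on ℓ∞ extending the Cesàro mean; and (2) for every fixed x ∈ ℓ∞ and every k there exists a free ultrafilter 𝒢_k with limsup_{n→∞} Θ_{θ_k,n}(x) = 𝒢_k-lim_n Θ_{θ_k,n}(x). -/

import Mathlib

open Filter Topology

noncomputable section

/-- The space `ℓ∞` of bounded real sequences. -/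
abbrev EllInfty : Type := lp (fun _ : ℕ => ℝ) ⊤

/-- The characteristic sequence of a set `A ⊆ ℕ` (as a plain function). -/
def chiFun (A : Set ℕ) : ℕ → ℝ := A.indicator 1

lemma chiFun_memℓp (A : Set ℕ) : Memℓp (chiFun A) ⊤ := by
  apply memℓp_infty
  refine ⟨1, ?_⟩
  rintro r ⟨n, rfl⟩
  by_cases h : n ∈ A <;> simp [chiFun, Set.indicator, h]

/-- The characteristic sequence of a set `A ⊆ ℕ` as an element of `ℓ∞`. -/
def chi (A : Set ℕ) : EllInfty := ⟨chiFun A, chiFun_memℓp A⟩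

/-- `A(n) = |A ∩ {1,…,n}|` (as a real number). -/
def count (A : Set ℕ) (n : ℕ) : ℝ := ∑ k ∈ Finset.Icc 1 n, chiFun A k

/-- `A` has asymptotic density `d`, i.e. `A(n)/n → d`. -/
def HasDensity (A : Set ℕ) (d : ℝ) : Prop :=
  Tendsto (fun n => count A n / n) atTop (𝓝 d)

/-- A density measure: a finitely additive measure `μ : 𝒫(ℕ) → [0,1]` with `μ(ℕ) = 1`
which extends the asymptotic density. -/
def IsDensityMeasure (μ : Set ℕ → ℝ) : Prop :=
  (∀ A B : Set ℕ, Disjoint A B → μ (A ∪ B) = μ A + μ B) ∧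
  (∀ A : Set ℕ, μ A ∈ Set.Icc (0 : ℝ) 1) ∧
  μ Set.univ = 1 ∧
  (∀ A d, HasDensity A d → μ A = d)

/-- The sequence of Cesàro averages `(x₁ + … + xₙ)/n`. -/
def cesaroAvg (x : ℕ → ℝ) (n : ℕ) : ℝ := (∑ i ∈ Finset.Icc 1 n, x i) / n

/-- `x` has Cesàro mean `c`. -/
def HasCesaro (x : ℕ → ℝ) (c : ℝ) : Prop := Tendsto (cesaroAvg x) atTop (𝓝 c)

/-- A functional on `ℓ∞` is positive if it is nonnegative on nonnegative sequences. -/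
def IsPositiveFunctional (f : EllInfty → ℝ) : Prop :=
  ∀ x : EllInfty, (∀ n, 0 ≤ x n) → 0 ≤ f x

/-- A functional on `ℓ∞` extends the Cesàro mean. -/
def ExtendsCesaro (f : EllInfty → ℝ) : Prop :=
  ∀ (x : EllInfty) (c : ℝ), HasCesaro (⇑x) c → f x = c

/-- The set of positive continuous linear functionals on `ℓ∞` extending the Cesàro mean. -/
def Cesex : Set (EllInfty →L[ℝ] ℝ) :=
  {f | IsPositiveFunctional f ∧ ExtendsCesaro f}

/-- `f_C(x) = sup { f(x) : f ∈ Cesex }`. -/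
def fC (x : EllInfty) : ℝ := sSup ((fun f : EllInfty →L[ℝ] ℝ => f x) '' Cesex)

/-- `Θ_{θ,n}(x) = (Σ_{θn < i ≤ n} x_i) / (n(1-θ))`. -/
def Theta (x : ℕ → ℝ) (θ : ℝ) (n : ℕ) : ℝ :=
  (∑ i ∈ Finset.Icc 1 n, if θ * n < (i : ℝ) then x i else 0) / (n * (1 - θ))

/-- `Θ_θ(x) = limsup_{n → ∞} Θ_{θ,n}(x)`. -/
def ThetaSup (x : ℕ → ℝ) (θ : ℝ) : ℝ := limsup (Theta x θ) atTop

/-- `t(x) = lim_{θ → 1⁻} Θ_θ(x)`. -/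
def tFun (x : ℕ → ℝ) : ℝ := limUnder (𝓝[<] (1 : ℝ)) (ThetaSup x)

/-- `A_α(n) = Σ_{k ∈ A, k ≤ n} k^α`. -/
def aSum (A : Set ℕ) (α : ℝ) (n : ℕ) : ℝ :=
  ∑ k ∈ Finset.Icc 1 n, chiFun A k * (k : ℝ) ^ α

/-- The upper `α`-density `d̄_α(A) = limsup_{n→∞} A_α(n)/ℕ_α(n)`. -/
def upperADens (A : Set ℕ) (α : ℝ) : ℝ :=
  limsup (fun n => aSum A α n / aSum Set.univ α n) atTop

/-- The lower `α`-density `d̲_α(A) = liminf_{n→∞} A_α(n)/ℕ_α(n)`. -/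
def lowerADens (A : Set ℕ) (α : ℝ) : ℝ :=
  liminf (fun n => aSum A α n / aSum Set.univ α n) atTop

/-- `d̄_∞(A) = lim_{α→∞} d̄_α(A)`. -/
def dInftyUpper (A : Set ℕ) : ℝ := limUnder (atTop : Filter ℝ) (upperADens A)

/-- `d̲_∞(A) = lim_{α→∞} d̲_α(A)`. -/
def dInftyLower (A : Set ℕ) : ℝ := limUnder (atTop : Filter ℝ) (lowerADens A)

/-- The quotient `(A(n) - A(⌊θn⌋))/(n - θn)` appearing in the Pólya density. -/
def polyaQuot (A : Set ℕ) (θ : ℝ) (n : ℕ) : ℝ :=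
  (count A n - count A ⌊θ * n⌋₊) / (n - θ * n)

/-- The upper Pólya density `p̄(A)`. -/
def pUpper (A : Set ℕ) : ℝ :=
  limUnder (𝓝[<] (1 : ℝ)) (fun θ => limsup (polyaQuot A θ) atTop)

/-- The lower Pólya density `p̲(A)`. -/
def pLower (A : Set ℕ) : ℝ :=
  limUnder (𝓝[<] (1 : ℝ)) (fun θ => liminf (polyaQuot A θ) atTop)

/-- `λ̄(A) = sup { μ(A) : μ a density measure }`. -/
def lamUpper (A : Set ℕ) : ℝ := sSup {r | ∃ μ, IsDensityMeasure μ ∧ μ A = r}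

/-- `λ̲(A) = inf { μ(A) : μ a density measure }`. -/
def lamLower (A : Set ℕ) : ℝ := sInf {r | ∃ μ, IsDensityMeasure μ ∧ μ A = r}

/-- `d̄*(A) = inf { d(B) : B ⊇ A, B ∈ 𝒟 }`. -/
def dUpperStar (A : Set ℕ) : ℝ := sInf {r | ∃ B, A ⊆ B ∧ HasDensity B r}

/-- `d̲*(A) = sup { d(B) : B ⊆ A, B ∈ 𝒟 }`. -/
def dLowerStar (A : Set ℕ) : ℝ := sSup {r | ∃ B, B ⊆ A ∧ HasDensity B r}

/-- The `ℱ`-limit of a (bounded) real sequence along an ultrafilter `ℱ`: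
the unique `L` with `Tendsto x ℱ (𝓝 L)` (when it exists). -/
def ulim (F : Ultrafilter ℕ) (x : ℕ → ℝ) : ℝ := limUnder (F : Filter ℕ) x

/-- An ultrafilter is free (non-principal) iff it contains all cofinite sets. -/
def IsFreeUltrafilter (F : Ultrafilter ℕ) : Prop := (F : Filter ℕ) ≤ Filter.cofinite

/-- The set of positive functionals extending Cesàro mean, inside the weak-* dual of `ℓ∞`. -/
def CesexW : Set (WeakDual ℝ EllInfty) :=
  {f | (∀ x : EllInfty, (∀ n, 0 ≤ x n) → 0 ≤ f x) ∧
    ∀ (x : EllInfty) (c : ℝ), HasCesaro (⇑x) c → f x = c}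

lemma theta_sum_eq (x : ℕ → ℝ) {θ : ℝ} (h0 : 0 ≤ θ) (n : ℕ) :
    (∑ i ∈ Finset.Icc 1 n, if θ * n < (i : ℝ) then x i else 0)
      = ∑ i ∈ Finset.Ioc (⌊θ * n⌋₊) n, x i := by
  classical
  have hfl : 0 ≤ θ * n := by positivity
  rw [show Finset.Icc 1 n = Finset.Ioc 0 n from Finset.Icc_add_one_left_eq_Ioc 0 n, ← Finset.sum_filter]
  congr 1
  ext i
  simp only [Finset.mem_filter, Finset.mem_Ioc, ← Nat.floor_lt hfl]
  omega

lemma Theta_eq (x : ℕ → ℝ) {θ : ℝ} (h0 : 0 ≤ θ) (n : ℕ) :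
    Theta x θ n = (∑ i ∈ Finset.Ioc (⌊θ * n⌋₊) n, x i) / (n * (1 - θ)) := by
  rw [Theta, theta_sum_eq x h0]

lemma Theta_add (x y : ℕ → ℝ) {θ : ℝ} (h0 : 0 ≤ θ) (n : ℕ) :
    Theta (fun i => x i + y i) θ n = Theta x θ n + Theta y θ n := by
  simp [Theta_eq _ h0, Finset.sum_add_distrib, add_div]

lemma Theta_smul (c : ℝ) (x : ℕ → ℝ) {θ : ℝ} (h0 : 0 ≤ θ) (n : ℕ) :
    Theta (fun i => c * x i) θ n = c * Theta x θ n := by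
  simp [Theta_eq _ h0, ← Finset.mul_sum, mul_div_assoc]

lemma Theta_nonneg (x : ℕ → ℝ) {θ : ℝ} (h1 : θ ≤ 1) (hx : ∀ i, 0 ≤ x i) (n : ℕ) :
    0 ≤ Theta x θ n := by
  apply div_nonneg
  · refine Finset.sum_nonneg fun i _ => ?_
    split
    · exact hx i
    · exact le_refl 0
  · have h : (0:ℝ) ≤ 1 - θ := by linarith
    positivity

lemma Theta_abs_le (x : ℕ → ℝ) {θ C : ℝ} (hθ : θ ∈ Set.Ioo (0:ℝ) 1)
    (hC : ∀ i, |x i| ≤ C) {n : ℕ} (hn : 1 ≤ n) :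
    |Theta x θ n| ≤ C + C / (n * (1 - θ)) := by
  have hC0 : 0 ≤ C := le_trans (abs_nonneg _) (hC 0)
  have hd : (0:ℝ) < n * (1 - θ) := by
    have h1 : (0:ℝ) < 1 - θ := by linarith [hθ.2]
    have : (0:ℝ) < n := by exact_mod_cast hn
    positivity
  set m := ⌊θ * n⌋₊ with hm
  have hmn : m ≤ n := by
    apply Nat.floor_le_of_le
    calc θ * n ≤ 1 * n := by nlinarith [hθ.2, Nat.cast_nonneg (α := ℝ) n]
    _ = n := one_mul _
  have hsum : |∑ i ∈ Finset.Ioc m n, x i| ≤ (n - m : ℝ) * C := by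
    calc |∑ i ∈ Finset.Ioc m n, x i| ≤ ∑ i ∈ Finset.Ioc m n, |x i| :=
          Finset.abs_sum_le_sum_abs _ _
    _ ≤ ∑ i ∈ Finset.Ioc m n, C := Finset.sum_le_sum fun i _ => hC i
    _ = ((n - m : ℕ) : ℝ) * C := by rw [Finset.sum_const, Nat.card_Ioc]; simp [mul_comm]
    _ = (n - m : ℝ) * C := by rw [Nat.cast_sub hmn]
  have hfloor : θ * n - 1 < (m : ℝ) := by
    have := Nat.lt_floor_add_one (θ * n)
    linarith
  have hkey : (n - m : ℝ) * C ≤ (n * (1 - θ) + 1) * C := by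
    apply mul_le_mul_of_nonneg_right _ hC0
    nlinarith
  rw [Theta_eq x (le_of_lt hθ.1), abs_div, abs_of_pos hd]
  rw [div_le_iff₀ hd]
  calc |∑ i ∈ Finset.Ioc m n, x i| ≤ (n * (1 - θ) + 1) * C := le_trans hsum hkey
  _ = (C + C / (n * (1-θ))) * (n * (1-θ)) := by rw [add_mul (C) (C / (n * (1-θ))), div_mul_cancel₀ _ hd.ne']; ring

lemma ulim_tendsto {y : ℕ → ℝ} {C : ℝ} (hC : ∀ n, |y n| ≤ C) (G : Ultrafilter ℕ) :
    Tendsto y (G : Filter ℕ) (𝓝 (ulim G y)) := by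
  apply tendsto_nhds_limUnder
  have hmem : Set.Icc (-C) C ∈ Ultrafilter.map y G := by
    have : ∀ n, y n ∈ Set.Icc (-C) C := fun n => abs_le.1 (hC n)
    exact Filter.mem_map.2 (Filter.univ_mem' (f := (G : Filter ℕ)) this)
  obtain ⟨a, _, ha⟩ := isCompact_Icc.ultrafilter_le_nhds (Ultrafilter.map y G)
    (le_principal_iff.2 hmem)
  exact ⟨a, ha⟩

lemma tendsto_floor_comp {θ : ℝ} (hθ : 0 < θ) :
    Tendsto (fun n : ℕ => ⌊θ * n⌋₊) atTop atTop :=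
  tendsto_nat_floor_atTop.comp
    (Tendsto.const_mul_atTop hθ tendsto_natCast_atTop_atTop)

lemma ratio_tendsto {θ : ℝ} (hθ0 : 0 < θ) (hθ1 : θ < 1) :
    Tendsto (fun n : ℕ => (⌊θ * n⌋₊ : ℝ) / n) atTop (𝓝 θ) := by
  have hlow : Tendsto (fun n : ℕ => θ - 1 / (n:ℝ)) atTop (𝓝 θ) := by
    have := tendsto_one_div_atTop_nhds_zero_nat (𝕜 := ℝ)
    simpa using tendsto_const_nhds.sub this
  apply tendsto_of_tendsto_of_tendsto_of_le_of_le' hlow tendsto_const_nhds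
  · filter_upwards [eventually_ge_atTop 1] with n hn
    have hn' : (0:ℝ) < n := by exact_mod_cast hn
    have h := Nat.lt_floor_add_one (θ * n)
    rw [le_div_iff₀ hn']
    have e : (1/(n:ℝ))*n = 1 := by field_simp
    nlinarith
  · filter_upwards [eventually_ge_atTop 1] with n hn
    have hn' : (0:ℝ) < n := by exact_mod_cast hn
    have h := Nat.floor_le (by positivity : (0:ℝ) ≤ θ * n)
    rw [div_le_iff₀ hn']
    nlinarith

lemma theta_tendsto_of_cesaro {x : ℕ → ℝ} {c θ : ℝ} (hθ : θ ∈ Set.Ioo (0:ℝ) 1)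
    (hc : HasCesaro x c) : Tendsto (Theta x θ) atTop (𝓝 c) := by
  obtain ⟨hθ0, hθ1⟩ := hθ
  have h1θ : (1:ℝ) - θ ≠ 0 := by linarith
  set A := cesaroAvg x with hA
  set m : ℕ → ℕ := fun n => ⌊θ * n⌋₊ with hmdef
  have hS : ∀ n : ℕ, ∑ i ∈ Finset.Ioc 0 n, x i = n * A n := by
    intro n
    rcases Nat.eq_zero_or_pos n with h | h
    · subst h; simp
    · have hn : (n:ℝ) ≠ 0 := by positivity
      rw [hA, cesaroAvg, show Finset.Icc 1 n = Finset.Ioc 0 n from Finset.Icc_add_one_left_eq_Ioc 0 n]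
      field_simp
  have hkey : ∀ n : ℕ, 1 ≤ n →
      Theta x θ n = A n * (1/(1-θ)) - A (m n) * (((m n : ℝ)/n)/(1-θ)) := by
    intro n hn
    have hn' : (n:ℝ) ≠ 0 := by positivity
    have hmn : m n ≤ n := by
      apply Nat.floor_le_of_le
      nlinarith [Nat.cast_nonneg (α := ℝ) n]
    have hsplit : (∑ i ∈ Finset.Ioc 0 (m n), x i) + ∑ i ∈ Finset.Ioc (m n) n, x i
        = ∑ i ∈ Finset.Ioc 0 n, x i :=
      Finset.sum_Ioc_consecutive _ (Nat.zero_le _) hmn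
    have : (∑ i ∈ Finset.Ioc (m n) n, x i) = n * A n - (m n) * A (m n) := by
      rw [← hS n, ← hsplit, hS (m n)]; ring
    rw [Theta_eq x (le_of_lt hθ0), this]
    field_simp
  have hlim : Tendsto (fun n => A n * (1/(1-θ)) - A (m n) * (((m n : ℝ)/n)/(1-θ)))
      atTop (𝓝 (c * (1/(1-θ)) - c * (θ/(1-θ)))) := by
    apply Tendsto.sub
    · exact hc.mul_const _
    · exact (hc.comp (tendsto_floor_comp hθ0)).mul
        ((ratio_tendsto hθ0 hθ1).div_const _)
  have hval : c * (1/(1-θ)) - c * (θ/(1-θ)) = c := by field_simp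
  rw [hval] at hlim
  apply hlim.congr'
  filter_upwards [eventually_ge_atTop 1] with n hn
  exact (hkey n hn).symm

lemma exists_free_ultrafilter_limsup (y : ℕ → ℝ) (hb : ∃ C, ∀ n, |y n| ≤ C) :
    ∃ G : Ultrafilter ℕ, IsFreeUltrafilter G ∧ limsup y atTop = ulim G y := by
  obtain ⟨C, hC⟩ := hb
  set L := limsup y atTop with hL
  have hbdd : IsBoundedUnder (· ≤ ·) (atTop : Filter ℕ) y :=
    ⟨C, eventually_map.2 (Eventually.of_forall fun n => (abs_le.1 (hC n)).2)⟩
  have hbdd' : IsBoundedUnder (· ≥ ·) (atTop : Filter ℕ) y :=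
    ⟨-C, eventually_map.2 (Eventually.of_forall fun n => (abs_le.1 (hC n)).1)⟩
  have hcob : IsCoboundedUnder (· ≤ ·) (atTop : Filter ℕ) y :=
    hbdd'.isCoboundedUnder_le
  have hfreq : ∀ s ∈ 𝓝 L, ∃ᶠ n in atTop, y n ∈ s := by
    intro s hs
    obtain ⟨ε, hε, hball⟩ := Metric.mem_nhds_iff.1 hs
    have h1 : ∀ᶠ n in atTop, y n < L + ε :=
      eventually_lt_of_limsup_lt (by linarith) hbdd
    have h2 : ∃ᶠ n in atTop, L - ε < y n :=
      frequently_lt_of_lt_limsup hcob (by linarith)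
    refine (h2.and_eventually h1).mono fun n ⟨ha, hb⟩ => hball ?_
    rw [Metric.mem_ball, Real.dist_eq, abs_sub_lt_iff]
    constructor <;> linarith
  have hne : NeBot ((atTop : Filter ℕ) ⊓ comap y (𝓝 L)) := by
    rw [← Filter.map_neBot_iff y, Filter.push_pull]
    rw [neBot_iff]
    intro hbot
    have := empty_mem_iff_bot.2 hbot
    rw [Filter.mem_inf_iff] at this
    obtain ⟨t1, ht1, t2, ht2, hteq⟩ := this
    obtain ⟨n, hn1, hn2⟩ := ((hfreq t2 ht2).and_eventually ht1).exists
    have : y n ∈ t1 ∩ t2 := ⟨hn2, hn1⟩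
    rw [← hteq] at this
    exact this
  obtain ⟨G, hG⟩ := Ultrafilter.exists_le ((atTop : Filter ℕ) ⊓ comap y (𝓝 L))
  have hGat : (G : Filter ℕ) ≤ atTop := hG.trans inf_le_left
  have htend : Tendsto y (G : Filter ℕ) (𝓝 L) :=
    tendsto_iff_comap.2 (hG.trans inf_le_right)
  refine ⟨G, ?_, (htend.limUnder_eq).symm⟩
  rwa [IsFreeUltrafilter, Nat.cofinite_eq_atTop]

/-- (1) For a free ultrafilter `ℱ`, a sequence `(𝒢_k)` of free ultrafilters and
`θ_k → 1⁻` in `(0,1)`, the map `x ↦ ℱ-lim_k 𝒢_k-lim_n Θ_{θ_k,n}(x)` is a positive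
continuous linear functional on `ℓ∞` extending the Cesàro mean; (2) for each fixed
`x` and `k` there is a free ultrafilter `𝒢` along which the `𝒢`-limit of
`Θ_{θ_k,n}(x)` equals `limsup_{n→∞} Θ_{θ_k,n}(x)`. -/
theorem stmt19 (θs : ℕ → ℝ) (hθ : ∀ k, θs k ∈ Set.Ioo (0 : ℝ) 1)
    (hθlim : Tendsto θs atTop (𝓝 1)) (F : Ultrafilter ℕ) (hF : IsFreeUltrafilter F)
    (Gs : ℕ → Ultrafilter ℕ) (hGs : ∀ k, IsFreeUltrafilter (Gs k)) :
    (∃ f : EllInfty →L[ℝ] ℝ, IsPositiveFunctional f ∧ ExtendsCesaro f ∧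
      ∀ x : EllInfty, f x = ulim F (fun k => ulim (Gs k) (fun n => Theta (⇑x) (θs k) n))) ∧
    (∀ (x : EllInfty) (k : ℕ), ∃ G : Ultrafilter ℕ, IsFreeUltrafilter G ∧
      limsup (fun n => Theta (⇑x) (θs k) n) atTop
        = ulim G (fun n => Theta (⇑x) (θs k) n)) := by
  classical
  have hGle : ∀ k, (Gs k : Filter ℕ) ≤ atTop := fun k => by
    rw [← Nat.cofinite_eq_atTop]; exact hGs k
  have hxb : ∀ (x : EllInfty) (i : ℕ), |x i| ≤ ‖x‖ := fun x i => by
    have h := lp.norm_apply_le_norm (E := fun _ : ℕ => ℝ) (p := ⊤) ENNReal.top_ne_zero x i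
    rwa [Real.norm_eq_abs] at h
  have hnn : ∀ x : EllInfty, (0:ℝ) ≤ ‖x‖ := fun x => norm_nonneg x
  have hcrude : ∀ (x : EllInfty) (k : ℕ) (n : ℕ),
      |Theta (⇑x) (θs k) n| ≤ ‖x‖ + ‖x‖ / (1 - θs k) := by
    intro x k n
    have h1θ : (0:ℝ) < 1 - θs k := by linarith [(hθ k).2]
    rcases Nat.eq_zero_or_pos n with h | h
    · subst h
      have : Theta (⇑x) (θs k) 0 = 0 := by simp [Theta]
      rw [this, abs_zero]
      positivity
    · refine (Theta_abs_le (⇑x) (hθ k) (hxb x) h).trans ?_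
      have : ‖x‖ / ((n:ℝ) * (1 - θs k)) ≤ ‖x‖ / (1 - θs k) := by
        apply div_le_div_of_nonneg_left (hnn x) h1θ
        nlinarith [(Nat.one_le_cast (α := ℝ)).2 h]
      linarith
  constructor
  · -- Part 1
    set g : EllInfty → ℕ → ℝ :=
      fun x k => ulim (Gs k) (fun n => Theta (⇑x) (θs k) n) with hgdef
    set f0 : EllInfty → ℝ := fun x => ulim F (g x) with hf0def
    have hgt : ∀ (x : EllInfty) (k : ℕ),
        Tendsto (fun n => Theta (⇑x) (θs k) n) (Gs k : Filter ℕ) (𝓝 (g x k)) :=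
      fun x k => ulim_tendsto (hcrude x k) (Gs k)
    have hgb : ∀ (x : EllInfty) (k : ℕ), |g x k| ≤ ‖x‖ := by
      intro x k
      have h1θ : (0:ℝ) < 1 - θs k := by linarith [(hθ k).2]
      refine le_of_forall_pos_le_add fun ε hε => ?_
      have ht0 : Tendsto (fun n : ℕ => ‖x‖ / ((n:ℝ) * (1 - θs k))) atTop (𝓝 0) := by
        have hd : Tendsto (fun n : ℕ => ((n:ℝ) * (1 - θs k))) atTop atTop :=
          Tendsto.atTop_mul_const h1θ tendsto_natCast_atTop_atTop
        exact Tendsto.div_atTop tendsto_const_nhds hd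
      have hev : ∀ᶠ n in (atTop : Filter ℕ), |Theta (⇑x) (θs k) n| ≤ ‖x‖ + ε := by
        filter_upwards [eventually_ge_atTop 1, ht0.eventually_lt_const hε] with n h1 h2
        have := Theta_abs_le (⇑x) (hθ k) (hxb x) h1
        linarith
      exact le_of_tendsto (hgt x k).abs (hev.filter_mono (hGle k))
    have hft : ∀ x : EllInfty, Tendsto (g x) (F : Filter ℕ) (𝓝 (f0 x)) :=
      fun x => ulim_tendsto (hgb x) F
    have hfb : ∀ x : EllInfty, |f0 x| ≤ ‖x‖ :=
      fun x => le_of_tendsto (hft x).abs (Eventually.of_forall fun k => hgb x k)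
    have hgadd : ∀ (x y : EllInfty) (k : ℕ), g (x + y) k = g x k + g y k := by
      intro x y k
      have e : ∀ n, Theta (⇑(x + y)) (θs k) n
          = Theta (⇑x) (θs k) n + Theta (⇑y) (θs k) n := by
        intro n
        have hco : ⇑(x + y) = fun i => x i + y i := by
          ext i; simp
        rw [hco]
        exact Theta_add _ _ (le_of_lt (hθ k).1) n
      exact (((hgt x k).add (hgt y k)).congr fun n => (e n).symm).limUnder_eq
    have hgsmul : ∀ (c : ℝ) (x : EllInfty) (k : ℕ), g (c • x) k = c * g x k := by
      intro c x k
      have e : ∀ n, Theta (⇑(c • x)) (θs k) n = c * Theta (⇑x) (θs k) n := by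
        intro n
        have hco : ⇑(c • x) = fun i => c * x i := by
          ext i; simp
        rw [hco]
        exact Theta_smul c _ (le_of_lt (hθ k).1) n
      exact (((hgt x k).const_mul c).congr fun n => (e n).symm).limUnder_eq
    have hadd : ∀ x y : EllInfty, f0 (x + y) = f0 x + f0 y := by
      intro x y
      exact (((hft x).add (hft y)).congr fun k => (hgadd x y k).symm).limUnder_eq
    have hsmul : ∀ (c : ℝ) (x : EllInfty), f0 (c • x) = c * f0 x := by
      intro c x
      exact (((hft x).const_mul c).congr fun k => (hgsmul c x k).symm).limUnder_eq
    let L : EllInfty →ₗ[ℝ] ℝ :=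
      { toFun := f0
        map_add' := hadd
        map_smul' := fun c x => by simpa using hsmul c x }
    have hLb : ∀ x : EllInfty, ‖L x‖ ≤ 1 * ‖x‖ := fun x => by
      rw [one_mul, Real.norm_eq_abs]; exact hfb x
    refine ⟨LinearMap.mkContinuous L 1 hLb, ?_, ?_, fun x => rfl⟩
    · -- positivity
      intro x hx
      have hθn : ∀ k n, 0 ≤ Theta (⇑x) (θs k) n :=
        fun k n => Theta_nonneg _ (le_of_lt (hθ k).2) hx n
      have hgnn : ∀ k, 0 ≤ g x k :=
        fun k => ge_of_tendsto (hgt x k) (Eventually.of_forall (hθn k))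
      exact ge_of_tendsto (hft x) (Eventually.of_forall hgnn)
    · -- extends Cesàro
      intro x c hc
      have hgc : ∀ k, g x k = c := by
        intro k
        exact ((theta_tendsto_of_cesaro (hθ k) hc).mono_left (hGle k)).limUnder_eq
      show f0 x = c
      exact ((tendsto_const_nhds (x := c) (f := (F : Filter ℕ))).congr
        fun k => (hgc k).symm).limUnder_eq
  · -- Part 2
    intro x k
    exact exists_free_ultrafilter_limsup _ ⟨‖x‖ + ‖x‖ / (1 - θs k), hcrude x k⟩
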